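/- Let Z_1, Z_2, ... be i.i.d. standard normal random variables, n > 0, a ≥ 1, and U_n(a) = Σ_{i≥1} Z_i^2/(a·e^{i/a} + n). Then E[U_n(a)] ≥ (a/(2n))·log(n/a) whenever 1 ≤ a ≤ n/e. -/

import Mathlib

open MeasureTheory ProbabilityTheory

open scoped ENNReal NNReal
open Real

lemma sq_exp_integral : ∫ x : ℝ, x ^ 2 * Real.exp (-(1/2) * x ^ 2) = Real.sqrt 2 * Real.sqrt π := by
  have h1 : ∫ x : ℝ, x ^ 2 * Real.exp (-(1/2) * x ^ 2)
      = 2 * ∫ x in Set.Ioi (0:ℝ), x ^ 2 * Real.exp (-(1/2) * x ^ 2) := by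
    rw [← integral_comp_abs (f := fun t => t ^ 2 * Real.exp (-(1/2) * t ^ 2))]
    congr 1 with x
    rw [sq_abs]
  have h2 : ∫ x in Set.Ioi (0:ℝ), x ^ 2 * Real.exp (-(1/2) * x ^ 2)
      = (1/2 : ℝ) ^ (-(((2:ℝ) + 1)) / 2) * (1 / 2) * Real.Gamma (((2:ℝ)+1)/2) := by
    rw [← integral_rpow_mul_exp_neg_mul_rpow (by norm_num) (by norm_num) (by norm_num : (0:ℝ) < 1/2)]
    congr 1 with x
    rw [show ((2:ℝ)) = ((2:ℕ):ℝ) by norm_num, Real.rpow_natCast]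
  have hG : Real.Gamma (((2:ℝ)+1)/2) = (1/2) * Real.sqrt π := by
    have : ((2:ℝ)+1)/2 = 1/2 + 1 := by norm_num
    rw [this, Real.Gamma_add_one (by norm_num), Real.Gamma_one_half_eq]
  have hpow : (1/2 : ℝ) ^ (-(((2:ℝ) + 1)) / 2) = 2 * Real.sqrt 2 := by
    rw [show (-(((2:ℝ) + 1)) / 2) = -(3/2 : ℝ) by norm_num, one_div,
      Real.inv_rpow (by norm_num), ← Real.rpow_neg (by norm_num), neg_neg,
      show (3/2:ℝ) = 1 + 1/2 by norm_num, Real.rpow_add (by norm_num), Real.rpow_one,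
      ← Real.sqrt_eq_rpow]
  rw [h1, h2, hG, hpow]
  ring

lemma gauss_pdf_smul (x : ℝ) :
    gaussianPDFReal 0 1 x = (Real.sqrt (2 * π))⁻¹ * Real.exp (-(1/2) * x ^ 2) := by
  rw [gaussianPDFReal]
  push_cast
  congr 1
  · norm_num
  · congr 1; ring

lemma gauss_density_eq : gaussianPDF 0 1
    = fun x => ((Real.toNNReal (gaussianPDFReal 0 1 x) : ℝ≥0) : ℝ≥0∞) := rfl

lemma integrable_mul_pdf : Integrable (fun x : ℝ => gaussianPDFReal 0 1 x * x ^ 2) := by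
  have h := (integrable_rpow_mul_exp_neg_mul_sq (by norm_num : (0:ℝ) < 1/2)
    (by norm_num : (-1:ℝ) < 2)).const_mul ((Real.sqrt (2 * π))⁻¹)
  refine h.congr (Filter.Eventually.of_forall fun x => ?_)
  simp only [gauss_pdf_smul]
  have h2 : ∀ y:ℝ, y ^ (2:ℝ) = y ^ 2 := fun y => by
    rw [show (2:ℝ)=((2:ℕ):ℝ) by norm_num, Real.rpow_natCast]
  simp only [h2]
  ring

lemma gauss_sq_integrable : Integrable (fun x : ℝ => x ^ 2) (gaussianReal 0 1) := by
  rw [gaussianReal_of_var_ne_zero 0 one_ne_zero, gauss_density_eq,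
    integrable_withDensity_iff_integrable_smul
      ((measurable_gaussianPDFReal 0 1).real_toNNReal)]
  refine integrable_mul_pdf.congr (Filter.Eventually.of_forall fun x => ?_)
  simp only [NNReal.smul_def, smul_eq_mul, Real.coe_toNNReal _ (gaussianPDFReal_nonneg 0 1 x)]

lemma gauss_sq_moment : ∫ x : ℝ, x ^ 2 ∂(gaussianReal 0 1) = 1 := by
  rw [gaussianReal_of_var_ne_zero 0 one_ne_zero, gauss_density_eq,
    integral_withDensity_eq_integral_smul ((measurable_gaussianPDFReal 0 1).real_toNNReal)]
  have : ∫ x : ℝ, (Real.toNNReal (gaussianPDFReal 0 1 x)) • x ^ 2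
      = ∫ x : ℝ, (Real.sqrt (2 * π))⁻¹ * (x ^ 2 * Real.exp (-(1/2) * x ^ 2)) := by
    congr 1 with x
    simp only [NNReal.smul_def, smul_eq_mul]
    rw [Real.coe_toNNReal _ (gaussianPDFReal_nonneg 0 1 x), gauss_pdf_smul]
    ring
  rw [this, integral_const_mul, sq_exp_integral, Real.sqrt_mul (by norm_num) π]
  have h2 : Real.sqrt 2 > 0 := by positivity
  have hp : Real.sqrt π > 0 := Real.sqrt_pos.mpr Real.pi_pos
  field_simp


/-- For `Z_i` i.i.d. standard normal and `U_n(a) = Σ_{i≥1} Z_i²/(a e^{i/a}+n)`: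
`E[U_n(a)] ≥ (a/(2n))·log(n/a)` whenever `1 ≤ a ≤ n/e`. -/
theorem stmt9 {Ω : Type*} [MeasurableSpace Ω] (μ : Measure Ω) [IsProbabilityMeasure μ]
    (Z : ℕ → Ω → ℝ) (hmeas : ∀ i, Measurable (Z i))
    (hindep : iIndepFun Z μ)
    (hgauss : ∀ i, Measure.map (Z i) μ = gaussianReal 0 1)
    (n a : ℝ) (ha : 1 ≤ a) (han : a ≤ n / Real.exp 1) :
    (a / (2 * n)) * Real.log (n / a) ≤
      ∫ ω, (∑' i : ℕ, (Z i ω) ^ 2 / (a * Real.exp (((i : ℝ) + 1) / a) + n)) ∂μ := by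
  have ha0 : (0:ℝ) < a := lt_of_lt_of_le zero_lt_one ha
  have hE1 : (0:ℝ) < Real.exp 1 := Real.exp_pos 1
  have hne : a * Real.exp 1 ≤ n := by rwa [le_div_iff₀ hE1] at han
  have hn0 : (0:ℝ) < n := lt_of_lt_of_le (by positivity) hne
  have hna : (0:ℝ) < n / a := div_pos hn0 ha0
  set L := Real.log (n / a) with hLdef
  have hlog1 : 1 ≤ L := by
    rw [hLdef, Real.le_log_iff_exp_le hna, le_div_iff₀ ha0]
    linarith [hne]
  set x := a * L with hxdef
  have hx1 : (1:ℝ) ≤ x := by nlinarith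
  set c : ℕ → ℝ := fun i => (a * Real.exp (((i : ℝ) + 1) / a) + n)⁻¹ with hcdef
  have hD0 : ∀ i : ℕ, (0:ℝ) < a * Real.exp (((i : ℝ) + 1) / a) + n := fun i => by positivity
  have hc0 : ∀ i, 0 ≤ c i := fun i => inv_nonneg.2 (hD0 i).le
  -- summability of c
  have hsum : Summable c := by
    refine Summable.of_nonneg_of_le hc0 (fun i => ?_)
      (summable_geometric_of_lt_one (Real.exp_nonneg (-1/a))
        (Real.exp_lt_one_iff.2 (div_neg_of_neg_of_pos (by norm_num) ha0)))
    have h1 : Real.exp ((i:ℝ)/a) ≤ a * Real.exp (((i : ℝ) + 1) / a) + n := by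
      have he : Real.exp (((i : ℝ) + 1) / a) = Real.exp (1/a) * Real.exp ((i:ℝ)/a) := by
        rw [← Real.exp_add]; congr 1; field_simp; ring
      have hae : 1 ≤ a * Real.exp (1/a) := by
        nlinarith [Real.one_le_exp (le_of_lt (by positivity : (0:ℝ) < 1/a)),
          Real.exp_pos (1/a)]
      have hmm := mul_le_mul_of_nonneg_right hae (Real.exp_pos ((i:ℝ)/a)).le
      rw [he]
      nlinarith [hmm, Real.exp_pos ((i:ℝ)/a)]
    calc c i ≤ (Real.exp ((i:ℝ)/a))⁻¹ := inv_anti₀ (Real.exp_pos _) h1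
      _ = Real.exp (-((i:ℝ)/a)) := (Real.exp_neg _).symm
      _ = Real.exp (-1/a) ^ i := by rw [← Real.exp_nat_mul]; congr 1; ring
  -- per-index expectation
  have hZmeas : ∀ i : ℕ, AEStronglyMeasurable (fun y : ℝ => y ^ 2) (Measure.map (Z i) μ) :=
    fun i => (measurable_id.pow_const 2).aestronglyMeasurable
  have hZ2int : ∀ i, Integrable (fun ω => Z i ω ^ 2) μ := by
    intro i
    have h := gauss_sq_integrable
    rw [← hgauss i] at h
    exact (integrable_map_measure (hZmeas i) (hmeas i).aemeasurable).1 h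
  have hZ2 : ∀ i, ∫ ω, Z i ω ^ 2 ∂μ = 1 := by
    intro i
    have h := integral_map (hmeas i).aemeasurable (hZmeas i)
    rw [hgauss i, gauss_sq_moment] at h
    exact h.symm
  set F : ℕ → Ω → ℝ := fun i ω => Z i ω ^ 2 / (a * Real.exp (((i : ℝ) + 1) / a) + n) with hFdef
  have hFint : ∀ i, Integrable (F i) μ := fun i => (hZ2int i).div_const _
  have hFval : ∀ i, ∫ ω, F i ω ∂μ = c i := by
    intro i
    rw [hFdef]
    simp only
    rw [integral_div, hZ2 i, one_div, hcdef]
  have hFnn : ∀ i ω, 0 ≤ F i ω := fun i ω => div_nonneg (sq_nonneg _) (hD0 i).le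
  -- swap integral and tsum
  have hswap : ∫ ω, (∑' i, F i ω) ∂μ = ∑' i, c i := by
    rw [integral_tsum (fun i => (hFint i).aestronglyMeasurable) ?_]
    · exact tsum_congr hFval
    · have heq : ∀ i : ℕ, ∫⁻ ω, ‖F i ω‖ₑ ∂μ = ENNReal.ofReal (c i) := by
        intro i
        have h1 : ∫⁻ ω, ‖F i ω‖ₑ ∂μ = ∫⁻ ω, ENNReal.ofReal (F i ω) ∂μ :=
          lintegral_congr fun ω => Real.enorm_eq_ofReal (hFnn i ω)
        have h2 := ofReal_integral_eq_lintegral_ofReal (hFint i) (ae_of_all μ (hFnn i))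
        rw [hFval] at h2
        rw [h1, ← h2]
      simp only [heq]
      rw [← ENNReal.ofReal_tsum_of_nonneg hc0 hsum]
      exact ENNReal.ofReal_ne_top
  -- pairing inequality
  have pair : ∀ i j : ℕ, ((i:ℝ)+1) + ((j:ℝ)+1) ≤ 2*x → 1/n ≤ c i + c j := by
    intro i j hij
    set p := a * Real.exp (((i : ℝ) + 1) / a) with hpdef
    set q := a * Real.exp (((j : ℝ) + 1) / a) with hqdef
    have hp : 0 < p := by rw [hpdef]; positivity
    have hq : 0 < q := by rw [hqdef]; positivity
    have hpq : p * q ≤ n^2 := by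
      have h1 : p * q = a^2 * Real.exp ((((i:ℝ)+1) + ((j:ℝ)+1))/a) := by
        rw [hpdef, hqdef, show ((((i:ℝ)+1) + ((j:ℝ)+1))/a) = ((i:ℝ)+1)/a + ((j:ℝ)+1)/a by ring,
          Real.exp_add]
        ring
      have h2 : Real.exp ((((i:ℝ)+1) + ((j:ℝ)+1))/a) ≤ Real.exp (2*L) := by
        apply Real.exp_le_exp.2
        rw [div_le_iff₀ ha0]
        have hx1' : 1 ≤ a * L := hxdef ▸ hx1
        nlinarith [hx1', hij]
      have h3 : Real.exp (2*L) = (n/a)^2 := by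
        rw [two_mul, Real.exp_add, hLdef, Real.exp_log hna]; ring
      have h4 : a^2 * Real.exp ((((i:ℝ)+1) + ((j:ℝ)+1))/a) ≤ a^2 * (n/a)^2 := by
        rw [← h3]
        exact mul_le_mul_of_nonneg_left h2 (sq_nonneg a)
      have h5 : a^2 * (n/a)^2 = n^2 := by field_simp
      linarith [h1 ▸ (h4.trans_eq h5)]
    have hpn : 0 < p + n := by linarith
    have hqn : 0 < q + n := by linarith
    have hcij : c i + c j = (p+n)⁻¹ + (q+n)⁻¹ := by rw [hcdef, hpdef, hqdef]
    rw [hcij, inv_eq_one_div, inv_eq_one_div, div_add_div _ _ hpn.ne' hqn.ne',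
      div_le_div_iff₀ hn0 (by positivity)]
    nlinarith [hpq]
  -- main combinatorial bound
  have main : x/(2*n) ≤ ∑' i, c i := by
    rcases le_or_gt (3/2 : ℝ) x with hbig | hsmall
    · -- big case
      set K := Nat.floor (2*x) with hKdef
      have hK3 : 3 ≤ K := Nat.le_floor (by push_cast; linarith)
      have hKle : (K:ℝ) ≤ 2*x := Nat.floor_le (by positivity)
      have hKgt : 2*x < K + 1 := Nat.lt_floor_add_one _
      have hK3' : (3:ℝ) ≤ K := by exact_mod_cast hK3
      have hxK : x ≤ (K:ℝ) - 1 := by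
        rcases le_or_gt 2 x with h2 | h2
        · linarith
        · linarith
      have hJK : ((K-1 : ℕ):ℝ) = (K:ℝ) - 1 := by
        rw [Nat.cast_sub (by omega)]; norm_num
      have hpairs : ∀ i ∈ Finset.range (K-1), 1/n ≤ c i + c (K-1-1-i) := by
        intro i hi
        have hi' : i < K - 1 := Finset.mem_range.1 hi
        apply pair
        rw [show K-1-1-i = K - (2+i) by omega, Nat.cast_sub (by omega)]
        push_cast
        linarith
      have hsum2 : ((K-1:ℕ):ℝ) * (1/n) ≤ 2 * ∑ i ∈ Finset.range (K-1), c i := by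
        have hrefl := Finset.sum_range_reflect c (K-1)
        have h1 : ∑ _i ∈ Finset.range (K-1), (1/n : ℝ)
            ≤ ∑ i ∈ Finset.range (K-1), (c i + c (K-1-1-i)) := Finset.sum_le_sum hpairs
        rw [Finset.sum_add_distrib, hrefl, Finset.sum_const, Finset.card_range,
          nsmul_eq_mul] at h1
        linarith
      have hS : x/(2*n) ≤ ∑ i ∈ Finset.range (K-1), c i := by
        rw [hJK] at hsum2
        have hsum2' : ((K:ℝ)-1) ≤ (2 * ∑ i ∈ Finset.range (K-1), c i) * n := by
          rw [← div_le_iff₀ hn0]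
          have h1n : ((K:ℝ) - 1) * (1/n) = ((K:ℝ)-1)/n := by ring
          linarith [h1n ▸ hsum2]
        rw [div_le_iff₀ (by positivity)]
        nlinarith [hsum2', hxK]
      exact hS.trans (Summable.sum_le_tsum _ (fun i _ => hc0 i) hsum)
    · -- small case
      have h00 : 1/n ≤ 2 * c 0 := by
        have h := pair 0 0 (by push_cast; linarith)
        linarith
      have h1a : 1/a ≤ L := by
        rw [div_le_iff₀ ha0]
        have hx1' : 1 ≤ a * L := hxdef ▸ hx1
        nlinarith [hx1']
      have haexp : a * Real.exp (1/a) ≤ n := by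
        have h2 : Real.exp (1/a) ≤ n/a := by
          calc Real.exp (1/a) ≤ Real.exp L := Real.exp_le_exp.2 h1a
            _ = n/a := by rw [hLdef, Real.exp_log hna]
        calc a * Real.exp (1/a) ≤ a * (n/a) := mul_le_mul_of_nonneg_left h2 ha0.le
          _ = n := by field_simp
      have hexp2 : a * Real.exp (2/a) ≤ 3 * n := by
        have hee : a * Real.exp (2/a) = (a * Real.exp (1/a)) * Real.exp (1/a) := by
          rw [mul_assoc, ← Real.exp_add]
          congr 2
          field_simp
          ring
        have he1 : Real.exp (1/a) ≤ Real.exp 1 := Real.exp_le_exp.2 (by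
          rw [div_le_one ha0]; exact ha)
        have he3 : Real.exp 1 ≤ 3 := by
          have := Real.exp_one_lt_d9
          linarith
        rw [hee]
        have h3n := mul_le_mul haexp (he1.trans he3) (Real.exp_pos (1/a)).le hn0.le
        linarith
      have hc1 : (x - 1)/(2*n) ≤ c 1 := by
        have hD1 : a * Real.exp ((((1:ℕ):ℝ)+1)/a) + n ≤ 4*n := by
          rw [show ((((1:ℕ):ℝ)+1)/a) = 2/a by norm_num]
          linarith
        have h4 : (4*n)⁻¹ ≤ c 1 := by
          rw [hcdef]
          exact inv_anti₀ (hD0 1) hD1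
        have hx32 : x - 1 ≤ 1/2 := by linarith
        calc (x-1)/(2*n) ≤ (1/2)/(2*n) := by gcongr
          _ = (4*n)⁻¹ := by ring
          _ ≤ c 1 := h4
      have hsum01 : c 0 + c 1 ≤ ∑' i, c i := by
        have h := Summable.sum_le_tsum (Finset.range 2) (fun i _ => hc0 i) hsum
        simpa [Finset.sum_range_succ] using h
      have hsplit : x/(2*n) = 1/(2*n) + (x-1)/(2*n) := by ring
      have h0' : 1/(2*n) ≤ c 0 := by
        have : (1:ℝ)/(2*n) = (1/n)/2 := by ring
        linarith
      linarith
  -- conclude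
  have hgoal : a / (2 * n) * L = x/(2*n) := by rw [hxdef]; ring
  calc a / (2 * n) * L = x/(2*n) := hgoal
    _ ≤ ∑' i, c i := main
    _ = ∫ ω, (∑' i, F i ω) ∂μ := hswap.symm
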